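/- In the ring A = ℤ[u]/(u² + 2u, 4u), the element u has additive order exactly 4, and (u+1)² = 1. -/

import Mathlib

open Polynomial

private noncomputable def phi8 : Polynomial ℤ →+* ZMod 8 := (aeval (2 : ZMod 8)).toRingHom

private lemma span_le_ker :
    (Ideal.span {X ^ 2 + 2 * X, 4 * X} : Ideal (Polynomial ℤ)) ≤ RingHom.ker phi8 := by
  rw [Ideal.span_le]
  intro p hp
  simp only [Set.mem_insert_iff, Set.mem_singleton_iff] at hp
  rcases hp with rfl | rfl <;> simp [phi8, RingHom.mem_ker, map_ofNat] <;> decide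

/-- In `A = ℤ[u]/(u² + 2u, 4u)`, the element `u` has additive order exactly 4 and
`(u + 1)² = 1`. -/
theorem KRP4_order_and_square :
    addOrderOf (Ideal.Quotient.mk
        (Ideal.span {X ^ 2 + 2 * X, 4 * X} : Ideal (Polynomial ℤ)) X) = 4 ∧
    (Ideal.Quotient.mk (Ideal.span {X ^ 2 + 2 * X, 4 * X} : Ideal (Polynomial ℤ)) X + 1) ^ 2
      = 1 := by
  set I : Ideal (Polynomial ℤ) := Ideal.span {X ^ 2 + 2 * X, 4 * X} with hI
  have hmem1 : (X ^ 2 + 2 * X : Polynomial ℤ) ∈ I :=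
    Ideal.subset_span (by simp)
  have hmem2 : (4 * X : Polynomial ℤ) ∈ I :=
    Ideal.subset_span (by simp)
  have hsq : (Ideal.Quotient.mk I X + 1) ^ 2 = 1 := by
    have h0 : Ideal.Quotient.mk I (X ^ 2 + 2 * X) = 0 :=
      (Ideal.Quotient.eq_zero_iff_mem).2 hmem1
    have : (Ideal.Quotient.mk I X + 1) ^ 2
        = Ideal.Quotient.mk I (X ^ 2 + 2 * X) + 1 := by
      simp only [map_add, map_mul, map_pow, map_ofNat]
      ring
    rw [this, h0, zero_add]
  refine ⟨?_, hsq⟩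
  -- lift to ZMod 8
  let ψ : (Polynomial ℤ ⧸ I) →+* ZMod 8 :=
    Ideal.Quotient.lift I phi8 (fun a ha => span_le_ker ha)
  have hψX : ψ (Ideal.Quotient.mk I X) = 2 := by
    simp [ψ, phi8]
  have h4 : 4 • (Ideal.Quotient.mk I X) = 0 := by
    have h0 : Ideal.Quotient.mk I (4 * X) = 0 :=
      (Ideal.Quotient.eq_zero_iff_mem).2 hmem2
    have : 4 • (Ideal.Quotient.mk I X) = Ideal.Quotient.mk I (4 * X) := by
      simp only [map_mul, map_ofNat, nsmul_eq_mul]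
      push_cast
      ring
    rw [this, h0]
  have h2 : 2 • (Ideal.Quotient.mk I X) ≠ 0 := by
    intro h
    have := congrArg ψ h
    rw [map_nsmul, hψX, map_zero] at this
    revert this
    decide
  have := addOrderOf_eq_prime_pow (p := 2) (n := 1)
    (x := Ideal.Quotient.mk I X) (by simpa using h2) (by simpa using h4)
  simpa using this
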